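/- Let H be a square-free graph and C = θ γ₁ γ₂ ⋯ γ_k θ a cycle in H of length at least 3, with gadget J as follows: a cycle s v₁ ⋯ v_k s, pendant u_i adjacent to v_i pinned to γ_i, and pendant x adjacent to s pinned to θ. Then for each γ ∈ {γ₁, γ_k}, there is exactly one homomorphism σ : J → H with σ(u_i) = γ_i, σ(x) = θ, and σ(s) = γ. -/
import Mathlib


/-- For the cycle vertex gadget built on a cycle `θ γ₁ … γ_k θ` (length ≥ 3, `θ = γ 0`) in a
square-free graph, for each `g ∈ {γ₁, γ_k}` there is exactly one homomorphism respecting the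
pins with `σ(s) = g`. -/
theorem stmt10 {V : Type*} [Fintype V]
    (H : SimpleGraph V)
    (hsf : ∀ a b c d : V, a ≠ b → b ≠ c → c ≠ d → d ≠ a → a ≠ c → b ≠ d →
      ¬(H.Adj a b ∧ H.Adj b c ∧ H.Adj c d ∧ H.Adj d a))
    (k : ℕ) (hk : 2 ≤ k)
    (γ : ℕ → V)
    (hdist : ∀ i j, i ≤ k → j ≤ k → i ≠ j → γ i ≠ γ j)
    (hwalk : ∀ i < k, H.Adj (γ i) (γ (i + 1)))
    (hclose : H.Adj (γ k) (γ 0)) :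
    ∀ g : V, (g = γ 1 ∨ g = γ k) →
      ∃! σ : Fin (k + 1) → V,
        (∀ i : ℕ, (h : i < k) →
          H.Adj (σ ⟨i, by omega⟩) (σ ⟨i + 1, by omega⟩)) ∧
        H.Adj (σ ⟨k, by omega⟩) (σ 0) ∧
        (∀ i : ℕ, 1 ≤ i → (h : i ≤ k) → H.Adj (σ ⟨i, by omega⟩) (γ i)) ∧
        H.Adj (σ 0) (γ 0) ∧
        σ 0 = g := by
  have key : ∀ a b p q : V, H.Adj a b → H.Adj a p → H.Adj b q → H.Adj p q → p ≠ q →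
      a = q ∨ b = p := by
    intro a b p q hab hap hbq hpq hpq'
    by_contra h
    push_neg at h
    exact hsf a b q p hab.ne hbq.ne (Ne.symm hpq') hap.symm.ne h.1 h.2
      ⟨hab, hbq, hpq.symm, hap.symm⟩
  have h0 : ((0 : Fin (k + 1)) : ℕ) = 0 := rfl
  intro g hg
  rcases hg with hg | hg
  · -- g = γ 1, σ i = γ (i+1) for i < k, σ k = γ 0
    refine ⟨fun i => if (i : ℕ) = k then γ 0 else γ ((i : ℕ) + 1), ⟨?_, ?_, ?_, ?_, ?_⟩, ?_⟩
    · intro i hi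
      simp only
      rw [if_neg (by omega : ¬ (i = k))]
      by_cases h : i + 1 = k
      · rw [if_pos h, h]
        exact hclose
      · rw [if_neg h]
        exact hwalk (i + 1) (by omega)
    · simp only [h0]
      rw [if_pos trivial, if_neg (by omega : ¬ (0 : ℕ) = k)]
      exact hwalk 0 (by omega)
    · intro i hi1 hik
      simp only
      by_cases h : i = k
      · rw [if_pos h, h]
        exact hclose.symm
      · rw [if_neg h]
        exact (hwalk i (by omega)).symm
    · simp only [h0]
      rw [if_neg (by omega : ¬ (0 : ℕ) = k)]
      exact (hwalk 0 (by omega)).symm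
    · simp only [h0]
      rw [if_neg (by omega : ¬ (0 : ℕ) = k), hg]
    · rintro σ ⟨hcyc, hcl, hpin, hpin0, hs⟩
      -- first: σ k = γ 0
      have hσk : σ ⟨k, by omega⟩ = γ 0 := by
        rcases key (σ ⟨k, by omega⟩) (σ 0) (γ k) (γ 0) hcl (hpin k (by omega) le_rfl)
            hpin0 hclose (hdist k 0 le_rfl (by omega) (by omega)) with h | h
        · exact h
        · exfalso
          rw [hs, hg] at h
          exact hdist 1 k (by omega) le_rfl (by omega) h
      -- downward induction: σ (k-1-m) = γ (k-m)
      have down : ∀ m, m ≤ k - 1 → σ ⟨k - 1 - m, by omega⟩ = γ (k - m) := by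
        intro m
        induction m with
        | zero =>
          intro _
          have ecyc : (⟨k - 1 + 1, by omega⟩ : Fin (k + 1)) = ⟨k, by omega⟩ :=
            Fin.ext (show k - 1 + 1 = k by omega)
          have ewalk : k - 1 + 1 = k := by omega
          rcases key (σ ⟨k - 1, by omega⟩) (σ ⟨k, by omega⟩) (γ (k - 1)) (γ k)
              (by have := hcyc (k - 1) (by omega); rwa [ecyc] at this)
              (hpin (k - 1) (by omega) (by omega)) (hpin k (by omega) le_rfl)
              (by have := hwalk (k - 1) (by omega); rwa [ewalk] at this)
              (hdist (k - 1) k (by omega) le_rfl (by omega)) with h | h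
          · simpa using h
          · exfalso
            rw [hσk] at h
            exact hdist 0 (k - 1) (by omega) (by omega) (by omega) h
        | succ m ih =>
          intro hm
          set i := k - 1 - (m + 1) with hi
          by_cases hi0 : i = 0
          · have h1 : k - (m + 1) = 1 := by omega
            rw [h1]
            have e0 : (⟨i, by omega⟩ : Fin (k + 1)) = 0 := Fin.ext (by simp [hi0])
            rw [e0, hs, hg]
          · have hprev : σ ⟨k - 1 - m, by omega⟩ = γ (k - m) := ih (by omega)
            have hcast : (⟨i + 1, by omega⟩ : Fin (k + 1)) = ⟨k - 1 - m, by omega⟩ :=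
              Fin.ext (show i + 1 = k - 1 - m by omega)
            have hik : i < k := by omega
            rcases key (σ ⟨i, by omega⟩) (σ ⟨i + 1, by omega⟩) (γ i) (γ (i + 1))
                (hcyc i hik)
                (hpin i (by omega) (by omega)) (hpin (i + 1) (by omega) (by omega))
                (hwalk i hik)
                (hdist i (i + 1) (by omega) (by omega) (by omega)) with h | h
            · have e : i + 1 = k - (m + 1) := by omega
              rw [← e]
              exact h
            · exfalso
              rw [hcast, hprev] at h
              exact hdist (k - m) i (by omega) (by omega) (by omega) h
      funext j
      have hj : (j : ℕ) < k + 1 := j.isLt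
      by_cases hjk : (j : ℕ) = k
      · have : j = ⟨k, by omega⟩ := Fin.ext hjk
        rw [this, hσk]
        simp
      · have hjle : (j : ℕ) ≤ k - 1 := by omega
        have := down (k - 1 - (j : ℕ)) (by omega)
        have hj' : σ j = γ ((j : ℕ) + 1) := by
          have heq : (⟨k - 1 - (k - 1 - (j : ℕ)), by omega⟩ : Fin (k + 1)) = j :=
            Fin.ext (by simp; omega)
          rw [heq] at this
          rw [this]
          congr 1
          omega
        rw [hj']
        simp [hjk]
  · -- g = γ k, σ 0 = γ k, σ i = γ (i-1) for 1 ≤ i ≤ k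
    refine ⟨fun i => if (i : ℕ) = 0 then γ k else γ ((i : ℕ) - 1), ⟨?_, ?_, ?_, ?_, ?_⟩, ?_⟩
    · intro i hi
      simp only
      by_cases h : i = 0
      · rw [if_pos h, if_neg (by omega : ¬ i + 1 = 0), h]
        exact hclose
      · rw [if_neg h, if_neg (by omega : ¬ i + 1 = 0)]
        have := hwalk (i - 1) (by omega)
        convert this using 2
        omega
    · simp only [h0]
      rw [if_neg (by omega : ¬ k = 0), if_pos trivial]
      have := hwalk (k - 1) (by omega)
      convert this using 2 <;> omega
    · intro i hi1 hik
      simp only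
      rw [if_neg (by omega : ¬ i = 0)]
      have := hwalk (i - 1) (by omega)
      convert this using 2
      omega
    · simp only [h0]
      rw [if_pos trivial]
      exact hclose
    · simp only [h0]
      rw [if_pos trivial, hg]
    · rintro σ ⟨hcyc, hcl, hpin, hpin0, hs⟩
      -- upward induction: σ i = γ (i - 1) for 1 ≤ i ≤ k
      have up : ∀ i, 1 ≤ i → (h : i ≤ k) → σ ⟨i, by omega⟩ = γ (i - 1) := by
        intro i
        induction i with
        | zero => omega
        | succ n ih =>
          intro _ hn
          by_cases hn0 : n = 0
          · subst hn0
            rcases key (σ ⟨1, by omega⟩) (σ 0) (γ 1) (γ 0)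
                (by have := hcyc 0 (by omega); exact this.symm)
                (hpin 1 (by omega) (by omega)) hpin0
                (by have := hwalk 0 (by omega); exact this.symm)
                (hdist 1 0 (by omega) (by omega) (by omega)) with h | h
            · simpa using h
            · exfalso
              rw [hs, hg] at h
              exact hdist k 1 le_rfl (by omega) (by omega) h
          · have hprev : σ ⟨n, by omega⟩ = γ (n - 1) := ih (by omega) (by omega)
            rcases key (σ ⟨n, by omega⟩) (σ ⟨n + 1, by omega⟩) (γ n) (γ (n + 1))
                (hcyc n (by omega))
                (hpin n (by omega) (by omega)) (hpin (n + 1) (by omega) (by omega))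
                (hwalk n (by omega))
                (hdist n (n + 1) (by omega) (by omega) (by omega)) with h | h
            · exfalso
              rw [hprev] at h
              exact hdist (n - 1) (n + 1) (by omega) (by omega) (by omega) h
            · simpa using h
      funext j
      by_cases hj0 : (j : ℕ) = 0
      · have : j = 0 := Fin.ext hj0
        rw [this, hs, hg]
        simp
      · have := up (j : ℕ) (by omega) (by omega)
        have heq : (⟨(j : ℕ), by omega⟩ : Fin (k + 1)) = j := Fin.ext rfl
        rw [heq] at this
        rw [this]
        simp [hj0]
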